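/- arXiv:2109.06005 — 6 statements merged into one kernel-verified Lean document; each statement's English description precedes it below -/
import Mathlib

section
/- (Conservation of total momentum.) Let d ≥ 1 and let the mixture parameters be as defined, with arbitrary δ ∈ ℝ and u21 = u2 − (m1/m2) ε (1−δ)(u2 − u1). Suppose f1, f2 : ℝ^d → ℝ are nonnegative, with f_k and v·f_k integrable, ∫ f_k dv = n_k and ∫ v f_k dv = n_k u_k for k = 1,2. Let M12 = M[n1, u12, T12, m1] and M21 = M[n2, u21, T21, m2] for any T12, T21 > 0. Then the total momentum exchange vanishes: ν12 n2 ∫_{ℝ^d} m1 v (M12(v) − f1(v)) dv + ν21 n1 ∫_{ℝ^d} m2 v (M21(v) − f2(v)) dv = 0. -/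
open MeasureTheory Real

/-- The Maxwell distribution `M[n,u,T,m]` on `ℝ^d`:
`M(v) = n / (2π T/m)^(d/2) · exp(−|v−u|² / (2T/m))`. -/
noncomputable def maxwellian (d : ℕ) (n : ℝ) (u : EuclideanSpace ℝ (Fin d)) (T m : ℝ)
    (v : EuclideanSpace ℝ (Fin d)) : ℝ :=
  n / (2 * π * T / m) ^ ((d : ℝ) / 2) * Real.exp (-‖v - u‖ ^ 2 / (2 * T / m))


lemma gauss_integral {b : ℝ} (hb : 0 < b) :
    ∫ v : EuclideanSpace ℝ (Fin d), rexp (-b * ‖v‖ ^ 2) = (π / b) ^ ((d : ℝ) / 2) := by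
  rw [GaussianFourier.integral_rexp_neg_mul_sq_norm hb]
  norm_num [finrank_euclideanSpace_fin]

lemma gauss_integrable {b : ℝ} (hb : 0 < b) :
    Integrable (fun v : EuclideanSpace ℝ (Fin d) => rexp (-b * ‖v‖ ^ 2)) := by
  refine Integrable.of_integral_ne_zero ?_
  rw [gauss_integral hb]
  positivity

lemma gauss_moment_integrable {b : ℝ} (hb : 0 < b) :
    Integrable (fun v : EuclideanSpace ℝ (Fin d) => rexp (-b * ‖v‖ ^ 2) • v) := by
  refine Integrable.mono' (((gauss_integrable (half_pos hb)).const_mul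
    (1 / Real.sqrt b))) ?_ ?_
  · exact (Continuous.smul (f := fun v : EuclideanSpace ℝ (Fin d) => rexp (-b * ‖v‖ ^ 2)) (by continuity) continuous_id).aestronglyMeasurable
  · filter_upwards with v
    rw [norm_smul, Real.norm_eq_abs, abs_of_nonneg (Real.exp_pos _).le]
    have hs : Real.sqrt b * ‖v‖ ≤ rexp (b / 2 * ‖v‖ ^ 2) := by
      have h1 : Real.sqrt b * ‖v‖ ≤ 1 + b / 2 * ‖v‖ ^ 2 := by
        nlinarith [sq_nonneg (Real.sqrt b * ‖v‖ - 1), Real.sq_sqrt hb.le, norm_nonneg v,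
          Real.sqrt_nonneg b]
      linarith [Real.add_one_le_exp (b / 2 * ‖v‖ ^ 2)]
    have hsb : 0 < Real.sqrt b := Real.sqrt_pos.2 hb
    have : ‖v‖ ≤ (1 / Real.sqrt b) * rexp (b / 2 * ‖v‖ ^ 2) := by
      rw [div_mul_eq_mul_div, le_div_iff₀ hsb, one_mul, mul_comm]
      exact hs
    calc rexp (-b * ‖v‖ ^ 2) * ‖v‖
        ≤ rexp (-b * ‖v‖ ^ 2) * ((1 / Real.sqrt b) * rexp (b / 2 * ‖v‖ ^ 2)) := by
          exact mul_le_mul_of_nonneg_left this (Real.exp_pos _).le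
      _ = 1 / Real.sqrt b * rexp (-(b / 2) * ‖v‖ ^ 2) := by
          rw [show (-(b/2)) * ‖v‖^2 = -b*‖v‖^2 + b/2*‖v‖^2 by ring, Real.exp_add]; ring

lemma gauss_moment_zero {b : ℝ} :
    ∫ v : EuclideanSpace ℝ (Fin d), rexp (-b * ‖v‖ ^ 2) • v = 0 := by
  have h := integral_neg_eq_self (fun v : EuclideanSpace ℝ (Fin d) => rexp (-b * ‖v‖ ^ 2) • v)
    (volume : Measure (EuclideanSpace ℝ (Fin d)))
  simp only [norm_neg, smul_neg] at h
  rw [integral_neg] at h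
  set x := ∫ v : EuclideanSpace ℝ (Fin d), rexp (-b * ‖v‖ ^ 2) • v with hx
  have h2 : x + x = 0 := by nth_rewrite 1 [← h]; exact neg_add_cancel x
  have h3 : (2:ℝ) • x = 0 := by rw [two_smul]; exact h2
  simpa using h3

lemma maxwellian_eq {n T m : ℝ} (hT : 0 < T) (hm : 0 < m) (u v : EuclideanSpace ℝ (Fin d)) :
    maxwellian d n u T m v
      = (n / (2 * π * T / m) ^ ((d : ℝ) / 2)) * rexp (-(m / (2 * T)) * ‖v - u‖ ^ 2) := by
  unfold maxwellian
  congr 1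
  congr 1
  field_simp

lemma norm_const_pos {n T m : ℝ} (hT : 0 < T) (hm : 0 < m) :
    (0:ℝ) < (2 * π * T / m) ^ ((d : ℝ) / 2) := by
  have : (0:ℝ) < 2 * π * T / m := by positivity
  positivity

lemma pi_div_b {T m : ℝ} (hT : 0 < T) (hm : 0 < m) :
    π / (m / (2 * T)) = 2 * π * T / m := by
  field_simp

lemma maxwellian_integral {n T m : ℝ} (hT : 0 < T) (hm : 0 < m)
    (u : EuclideanSpace ℝ (Fin d)) :
    ∫ v, maxwellian d n u T m v = n := by
  have hb : 0 < m / (2 * T) := by positivity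
  simp_rw [maxwellian_eq hT hm u]
  rw [integral_const_mul]
  have ht : ∫ v : EuclideanSpace ℝ (Fin d), rexp (-(m / (2 * T)) * ‖v - u‖ ^ 2)
      = ∫ v : EuclideanSpace ℝ (Fin d), rexp (-(m / (2 * T)) * ‖v‖ ^ 2) :=
    integral_sub_right_eq_self (μ := (volume : Measure (EuclideanSpace ℝ (Fin d))))
      (fun w => rexp (-(m / (2 * T)) * ‖w‖ ^ 2)) u
  rw [ht, gauss_integral hb, pi_div_b hT hm,
    div_mul_cancel₀ _ (norm_const_pos hT hm (n := n)).ne']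

lemma maxwellian_integrable {n T m : ℝ} (hT : 0 < T) (hm : 0 < m)
    (u : EuclideanSpace ℝ (Fin d)) :
    Integrable (fun v => maxwellian d n u T m v) := by
  have hb : 0 < m / (2 * T) := by positivity
  simp_rw [maxwellian_eq hT hm u]
  exact Integrable.const_mul ((gauss_integrable (d := d) hb).comp_sub_right u) _

lemma maxwellian_smul_integrable {n T m : ℝ} (hT : 0 < T) (hm : 0 < m)
    (u : EuclideanSpace ℝ (Fin d)) :
    Integrable (fun v => maxwellian d n u T m v • v) := by
  have hb : 0 < m / (2 * T) := by positivity
  simp_rw [maxwellian_eq hT hm u, mul_smul]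
  have key : Integrable (fun v : EuclideanSpace ℝ (Fin d) =>
      rexp (-(m / (2 * T)) * ‖v - u‖ ^ 2) • v) := ?_
  · exact key.smul (_ : ℝ)
  have h1 : Integrable (fun v : EuclideanSpace ℝ (Fin d) =>
      rexp (-(m / (2 * T)) * ‖v - u‖ ^ 2) • (v - u)) :=
    (gauss_moment_integrable (d := d) hb).comp_sub_right u
  have h2 : Integrable (fun v : EuclideanSpace ℝ (Fin d) =>
      rexp (-(m / (2 * T)) * ‖v - u‖ ^ 2) • u) :=
    ((gauss_integrable (d := d) hb).comp_sub_right u).smul_const u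
  have := h1.add h2
  refine this.congr (Filter.Eventually.of_forall fun v => ?_)
  simp only [Pi.add_apply, ← smul_add, sub_add_cancel]

lemma maxwellian_smul_integral {n T m : ℝ} (hT : 0 < T) (hm : 0 < m)
    (u : EuclideanSpace ℝ (Fin d)) :
    ∫ v, maxwellian d n u T m v • v = n • u := by
  have hb : 0 < m / (2 * T) := by positivity
  simp_rw [maxwellian_eq hT hm u, mul_smul]
  rw [integral_smul]
  have key : ∫ v : EuclideanSpace ℝ (Fin d), rexp (-(m / (2 * T)) * ‖v - u‖ ^ 2) • v
      = ((2 * π * T / m) ^ ((d : ℝ) / 2)) • u := by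
    have ht := integral_sub_right_eq_self (μ := (volume : Measure (EuclideanSpace ℝ (Fin d))))
      (fun w : EuclideanSpace ℝ (Fin d) => rexp (-(m / (2 * T)) * ‖w‖ ^ 2) • (w + u)) u
    simp only [sub_add_cancel] at ht
    rw [ht]
    have hsplit : ∫ w : EuclideanSpace ℝ (Fin d), rexp (-(m / (2 * T)) * ‖w‖ ^ 2) • (w + u)
        = (∫ w : EuclideanSpace ℝ (Fin d), rexp (-(m / (2 * T)) * ‖w‖ ^ 2) • w)
          + (∫ w : EuclideanSpace ℝ (Fin d), rexp (-(m / (2 * T)) * ‖w‖ ^ 2)) • u := by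
      rw [← integral_smul_const]
      rw [← integral_add (gauss_moment_integrable hb) ((gauss_integrable hb).smul_const u)]
      simp [smul_add]
    rw [hsplit, gauss_moment_zero, zero_add, gauss_integral hb, pi_div_b hT hm]
  rw [key, smul_smul, div_mul_cancel₀ _ (norm_const_pos hT hm (n := n)).ne']

/-- Conservation of total momentum for the two-species BGK model: with
`u12 = δ u1 + (1−δ) u2` and `u21 = u2 − (m1/m2) ε (1−δ)(u2 − u1)`, the total momentum
exchange `ν12 n2 ∫ m1 v (M12 − f1) dv + ν21 n1 ∫ m2 v (M21 − f2) dv` vanishes. -/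
theorem bgk_mixture_total_momentum_conservation
    (d : ℕ) (hd : 1 ≤ d)
    (m1 m2 : ℝ) (hm1 : 0 < m1) (hm2 : 0 < m2)
    (n1 n2 : ℝ) (hn1 : 0 < n1) (hn2 : 0 < n2)
    (u1 u2 : EuclideanSpace ℝ (Fin d))
    (ε : ℝ) (hε0 : 0 < ε) (hε1 : ε ≤ 1)
    (ν21 : ℝ) (hν21 : 0 < ν21) (ν12 : ℝ) (hν12 : ν12 = ε * ν21)
    (δ : ℝ)
    (u12 : EuclideanSpace ℝ (Fin d)) (hu12 : u12 = δ • u1 + (1 - δ) • u2)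
    (u21 : EuclideanSpace ℝ (Fin d))
    (hu21 : u21 = u2 - ((m1 / m2) * ε * (1 - δ)) • (u2 - u1))
    (T12 T21 : ℝ) (hT12 : 0 < T12) (hT21 : 0 < T21)
    (f1 f2 : EuclideanSpace ℝ (Fin d) → ℝ)
    (hf1pos : ∀ v, 0 ≤ f1 v) (hf2pos : ∀ v, 0 ≤ f2 v)
    (hf1int : Integrable f1) (hf2int : Integrable f2)
    (hf1vint : Integrable (fun v => f1 v • v)) (hf2vint : Integrable (fun v => f2 v • v))
    (hf1n : (∫ v, f1 v) = n1) (hf2n : (∫ v, f2 v) = n2)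
    (hf1u : (∫ v, f1 v • v) = n1 • u1) (hf2u : (∫ v, f2 v • v) = n2 • u2) :
    (ν12 * n2) • (∫ v, (m1 * (maxwellian d n1 u12 T12 m1 v - f1 v)) • v)
      + (ν21 * n1) • (∫ v, (m2 * (maxwellian d n2 u21 T21 m2 v - f2 v)) • v) = 0 := by
  have e1 : (∫ v, (m1 * (maxwellian d n1 u12 T12 m1 v - f1 v)) • v)
      = (m1 * n1) • u12 - (m1 * n1) • u1 := by
    have hfe : (fun v : EuclideanSpace ℝ (Fin d) =>
        (m1 * (maxwellian d n1 u12 T12 m1 v - f1 v)) • v)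
        = fun v => m1 • (maxwellian d n1 u12 T12 m1 v • v) - m1 • (f1 v • v) := by
      funext v
      rw [mul_sub, sub_smul, mul_smul, mul_smul]
    have h1 : Integrable (fun v => m1 • (maxwellian d n1 u12 T12 m1 v • v)) :=
      (maxwellian_smul_integrable hT12 hm1 u12).smul m1
    have h2 : Integrable (fun v : EuclideanSpace ℝ (Fin d) => m1 • (f1 v • v)) :=
      hf1vint.smul m1
    rw [hfe, integral_sub h1 h2, integral_smul, integral_smul,
      maxwellian_smul_integral hT12 hm1 u12, hf1u, smul_smul, smul_smul]
  have e2 : (∫ v, (m2 * (maxwellian d n2 u21 T21 m2 v - f2 v)) • v)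
      = (m2 * n2) • u21 - (m2 * n2) • u2 := by
    have hfe : (fun v : EuclideanSpace ℝ (Fin d) =>
        (m2 * (maxwellian d n2 u21 T21 m2 v - f2 v)) • v)
        = fun v => m2 • (maxwellian d n2 u21 T21 m2 v • v) - m2 • (f2 v • v) := by
      funext v
      rw [mul_sub, sub_smul, mul_smul, mul_smul]
    have h1 : Integrable (fun v => m2 • (maxwellian d n2 u21 T21 m2 v • v)) :=
      (maxwellian_smul_integrable hT21 hm2 u21).smul m2
    have h2 : Integrable (fun v : EuclideanSpace ℝ (Fin d) => m2 • (f2 v • v)) :=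
      hf2vint.smul m2
    rw [hfe, integral_sub h1 h2, integral_smul, integral_smul,
      maxwellian_smul_integral hT21 hm2 u21, hf2u, smul_smul, smul_smul]
  rw [e1, e2, hu12, hu21, hν12]
  match_scalars <;> field_simp <;> ring
end

section
/- (Conservation of total energy.) Let d ≥ 1 and let the mixture parameters u12, u21, T12, T21 be as defined, with arbitrary δ, α, γ ∈ ℝ such that T12 > 0 and T21 > 0. Suppose f1, f2 : ℝ^d → ℝ are nonnegative with (1+|v|²) f_k integrable, ∫ f_k dv = n_k, ∫ v f_k dv = n_k u_k, and ∫ m_k |v−u_k|² f_k dv = d n_k T_k for k = 1,2. Let M12 = M[n1, u12, T12, m1] and M21 = M[n2, u21, T21, m2]. Then the total energy exchange vanishes: ν12 n2 ∫_{ℝ^d} m1 |v|² (M12(v) − f1(v)) dv + ν21 n1 ∫_{ℝ^d} m2 |v|² (M21(v) − f2(v)) dv = 0. -/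
open MeasureTheory Real

local notation "E" d => EuclideanSpace ℝ (Fin d)

lemma bgk_aux_integrable_exp (d : ℕ) {b : ℝ} (hb : 0 < b) :
    Integrable (fun v : E d => rexp (-b * ‖v‖ ^ 2)) := by
  have h := GaussianFourier.integrable_cexp_neg_mul_sq_norm_add (V := E d)
    (b := (b : ℂ)) (by simpa using hb) 0 0
  have := h.norm
  have heq : ∀ v : E d, ‖Complex.exp (-((b:ℂ) * (‖v‖:ℂ) ^ 2))‖ = rexp (-(b * ‖v‖ ^ 2)) := by
    intro v
    rw [Complex.norm_exp]
    norm_cast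
  simpa [neg_mul, heq] using this

lemma bgk_aux_integrable_sq_exp (d : ℕ) {b : ℝ} (hb : 0 < b) :
    Integrable (fun v : E d => ‖v‖ ^ 2 * rexp (-b * ‖v‖ ^ 2)) := by
  have h2 : 0 < b / 2 := by linarith
  refine (((bgk_aux_integrable_exp d h2).const_mul (2 / b)).mono' ?_ ?_)
  · exact (Continuous.mul (by continuity) (by continuity)).aestronglyMeasurable
  · filter_upwards with v
    have h1 : 0 ≤ ‖v‖ ^ 2 := by positivity
    have key : ‖v‖ ^ 2 * rexp (-(b / 2) * ‖v‖ ^ 2) ≤ 2 / b := by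
      have hexp : (b / 2) * ‖v‖ ^ 2 ≤ rexp ((b / 2) * ‖v‖ ^ 2) := by
        have := Real.add_one_le_exp ((b / 2) * ‖v‖ ^ 2); linarith
      rw [neg_mul, Real.exp_neg, mul_inv_le_iff₀ (Real.exp_pos _)]
      calc ‖v‖ ^ 2 = (2 / b) * ((b/2) * ‖v‖ ^ 2) := by field_simp
        _ ≤ (2 / b) * rexp ((b / 2) * ‖v‖ ^ 2) :=
            mul_le_mul_of_nonneg_left hexp (by positivity)
    have heq : ‖v‖ ^ 2 * rexp (-b * ‖v‖ ^ 2)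
        = (‖v‖ ^ 2 * rexp (-(b/2) * ‖v‖ ^ 2)) * rexp (-(b/2) * ‖v‖ ^ 2) := by
      rw [mul_assoc, ← Real.exp_add]; ring_nf
    rw [Real.norm_eq_abs, abs_of_nonneg (by positivity), heq]
    exact mul_le_mul_of_nonneg_right key (Real.exp_pos _).le

lemma bgk_aux_integral_exp (d : ℕ) {b : ℝ} (hb : 0 < b) :
    ∫ v : E d, rexp (-b * ‖v‖ ^ 2) = (π / b) ^ ((d : ℝ) / 2) := by
  rw [GaussianFourier.integral_rexp_neg_mul_sq_norm hb]
  norm_num [finrank_euclideanSpace_fin]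

lemma bgk_aux_integral_sq_exp (d : ℕ) (hd : 1 ≤ d) {b : ℝ} (hb : 0 < b) :
    ∫ v : E d, ‖v‖ ^ 2 * rexp (-b * ‖v‖ ^ 2)
      = ((d : ℝ) / (2 * b)) * (π / b) ^ ((d : ℝ) / 2) := by
  haveI : Nontrivial (E d) := by
    apply Module.nontrivial_of_finrank_pos (R := ℝ)
    rw [finrank_euclideanSpace_fin]; omega
  have hd1 : (1:ℝ) ≤ (d:ℝ) := by exact_mod_cast hd
  have hdim : Module.finrank ℝ (E d) = d := finrank_euclideanSpace_fin
  have h0 := integral_fun_norm_addHaar (volume : Measure (E d))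
    (fun y : ℝ => rexp (-b * y ^ 2))
  have h2 := integral_fun_norm_addHaar (volume : Measure (E d))
    (fun y : ℝ => y ^ 2 * rexp (-b * y ^ 2))
  rw [hdim] at h0 h2
  set c : ℝ := (volume (Metric.ball (0 : E d) 1)).toReal with hc
  set X : ℝ := b ^ (-(d:ℝ)/2) * (1/2) * Real.Gamma ((d:ℝ)/2) with hX
  have hA : ∫ y in Set.Ioi (0:ℝ), y ^ (d - 1) • rexp (-b * y ^ 2) = X := by
    rw [show ∫ y in Set.Ioi (0:ℝ), y ^ (d - 1) • rexp (-b * y ^ 2)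
        = ∫ y in Set.Ioi (0:ℝ), y ^ (((d:ℝ) - 1)) * rexp (-b * y ^ (2:ℝ)) from
      setIntegral_congr_fun measurableSet_Ioi (fun y hy => by
        have h2r : y ^ (2:ℝ) = y ^ 2 := by
          rw [show (2:ℝ) = ((2:ℕ):ℝ) by norm_num, Real.rpow_natCast]
        have hpow : y ^ ((d:ℝ)-1) = y ^ (d-1) := by
          rw [show ((d:ℝ)-1) = (((d-1:ℕ)):ℝ) by rw [Nat.cast_sub hd, Nat.cast_one],
            Real.rpow_natCast]
        rw [smul_eq_mul, h2r, hpow])]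
    rw [integral_rpow_mul_exp_neg_mul_rpow two_pos (by linarith) hb]
    rw [hX]
    norm_num
  have hB : ∫ y in Set.Ioi (0:ℝ), y ^ (d - 1) • (y ^ 2 * rexp (-b * y ^ 2))
      = ((d:ℝ) / (2*b)) * X := by
    rw [show ∫ y in Set.Ioi (0:ℝ), y ^ (d - 1) • (y ^ 2 * rexp (-b * y ^ 2))
        = ∫ y in Set.Ioi (0:ℝ), y ^ (((d:ℝ) + 1)) * rexp (-b * y ^ (2:ℝ)) from
      setIntegral_congr_fun measurableSet_Ioi (fun y hy => by
        have h2r : y ^ (2:ℝ) = y ^ 2 := by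
          rw [show (2:ℝ) = ((2:ℕ):ℝ) by norm_num, Real.rpow_natCast]
        have hpow : y ^ ((d:ℝ)+1) = y ^ (d+1) := by
          rw [show ((d:ℝ)+1) = (((d+1:ℕ)):ℝ) by push_cast; ring, Real.rpow_natCast]
        rw [smul_eq_mul, h2r, hpow, ← mul_assoc, ← pow_add]
        congr 2
        omega)]
    have hd0 : (0:ℝ) ≤ (d:ℝ) := Nat.cast_nonneg d
    rw [integral_rpow_mul_exp_neg_mul_rpow two_pos (by linarith) hb]
    have hGamma : Real.Gamma (((d:ℝ) + 1 + 1) / 2) = ((d:ℝ)/2) * Real.Gamma ((d:ℝ)/2) := by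
      rw [show ((d:ℝ) + 1 + 1)/2 = (d:ℝ)/2 + 1 by ring, Real.Gamma_add_one (by positivity)]
    rw [hGamma, show (-((d:ℝ) + 1 + 1) / 2) = (-1) + (-(d:ℝ)/2) by ring, Real.rpow_add hb,
      Real.rpow_neg_one, hX]
    field_simp
  rw [hA] at h0
  rw [hB] at h2
  have key := (bgk_aux_integral_exp d hb).symm.trans h0
  rw [h2]
  simp only [nsmul_eq_mul, smul_eq_mul] at key ⊢
  rw [key]
  ring

open RealInnerProductSpace in
lemma bgk_aux_integrable_inner_exp (d : ℕ) (u : E d) {b : ℝ} (hb : 0 < b) :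
    Integrable (fun v : E d => ⟪u, v⟫ * rexp (-b * ‖v‖ ^ 2)) := by
  refine ((((bgk_aux_integrable_exp d hb).const_mul ‖u‖).add
    ((bgk_aux_integrable_sq_exp d hb).const_mul ‖u‖)).mono' ?_ ?_)
  · refine Continuous.aestronglyMeasurable ?_
    exact (continuous_const.inner continuous_id).mul (by continuity)
  · filter_upwards with v
    rw [Real.norm_eq_abs, abs_mul, abs_of_nonneg (Real.exp_pos _).le]
    have h1 : |⟪u, v⟫| ≤ ‖u‖ * ‖v‖ := abs_real_inner_le_norm u v
    have h2 : ‖v‖ ≤ 1 + ‖v‖ ^ 2 := by nlinarith [norm_nonneg v, sq_nonneg (‖v‖ - 1)]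
    have h3 : |⟪u, v⟫| * rexp (-b * ‖v‖ ^ 2) ≤ ‖u‖ * (1 + ‖v‖ ^ 2) * rexp (-b * ‖v‖ ^ 2) := by
      apply mul_le_mul_of_nonneg_right _ (Real.exp_pos _).le
      calc |⟪u, v⟫| ≤ ‖u‖ * ‖v‖ := h1
        _ ≤ ‖u‖ * (1 + ‖v‖ ^ 2) := mul_le_mul_of_nonneg_left h2 (norm_nonneg u)
    calc |⟪u, v⟫| * rexp (-b * ‖v‖ ^ 2) ≤ ‖u‖ * (1 + ‖v‖ ^ 2) * rexp (-b * ‖v‖ ^ 2) := h3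
      _ = ‖u‖ * rexp (-b * ‖v‖ ^ 2) + ‖u‖ * (‖v‖ ^ 2 * rexp (-b * ‖v‖ ^ 2)) := by ring

open RealInnerProductSpace in
lemma bgk_aux_integral_inner_exp (d : ℕ) (u : E d) (b : ℝ) :
    ∫ v : E d, ⟪u, v⟫ * rexp (-b * ‖v‖ ^ 2) = 0 := by
  have h := integral_neg_eq_self (fun v : E d => ⟪u, v⟫ * rexp (-b * ‖v‖ ^ 2)) volume
  simp only [inner_neg_right, norm_neg, neg_mul, integral_neg] at h
  simp only [neg_mul]
  linarith


lemma bgk_aux_maxwellian_eq (d : ℕ) (n : ℝ) (u : E d) {T m : ℝ} (hT : 0 < T) (hm : 0 < m)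
    (v : E d) :
    maxwellian d n u T m v
      = n / (2 * π * T / m) ^ ((d : ℝ) / 2) * rexp (-(m / (2 * T)) * ‖v - u‖ ^ 2) := by
  unfold maxwellian
  congr 1
  congr 1
  field_simp

lemma bgk_aux_integrable_maxwellian (d : ℕ) (n : ℝ) (u : E d) {T m : ℝ}
    (hT : 0 < T) (hm : 0 < m) : Integrable (maxwellian d n u T m) := by
  have hb : 0 < m / (2 * T) := by positivity
  have h : maxwellian d n u T m = fun v =>
      (n / (2 * π * T / m) ^ ((d : ℝ) / 2)) * rexp (-(m / (2 * T)) * ‖v - u‖ ^ 2) := by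
    funext v; exact bgk_aux_maxwellian_eq d n u hT hm v
  rw [h]
  exact ((bgk_aux_integrable_exp d hb).comp_sub_right u).const_mul _

lemma bgk_aux_integrable_sq_maxwellian (d : ℕ) (n : ℝ) (u : E d) {T m : ℝ}
    (hT : 0 < T) (hm : 0 < m) :
    Integrable (fun v => ‖v‖ ^ 2 * maxwellian d n u T m v) := by
  classical
  have hb : 0 < m / (2 * T) := by positivity
  set b := m / (2 * T)
  set C := n / (2 * π * T / m) ^ ((d : ℝ) / 2) with hC
  have hg : Integrable (fun w : E d => ‖w + u‖ ^ 2 * (C * rexp (-b * ‖w‖ ^ 2))) := by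
    have heq : (fun w : E d => ‖w + u‖ ^ 2 * (C * rexp (-b * ‖w‖ ^ 2)))
        = fun w : E d => C * (‖w‖ ^ 2 * rexp (-b * ‖w‖ ^ 2))
          + ((2 * C) * ((inner ℝ u w : ℝ) * rexp (-b * ‖w‖ ^ 2))
            + (C * ‖u‖ ^ 2) * rexp (-b * ‖w‖ ^ 2)) := by
      funext w
      rw [norm_add_sq_real, real_inner_comm]
      ring
    rw [heq]
    exact ((bgk_aux_integrable_sq_exp d hb).const_mul C).add
      (((bgk_aux_integrable_inner_exp d u hb).const_mul (2 * C)).add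
        ((bgk_aux_integrable_exp d hb).const_mul (C * ‖u‖ ^ 2)))
  have := hg.comp_sub_right u
  refine this.congr (Filter.Eventually.of_forall fun v => ?_)
  simp only [sub_add_cancel]
  rw [bgk_aux_maxwellian_eq d n u hT hm v]

lemma bgk_aux_integral_maxwellian (d : ℕ) (n : ℝ) (u : E d) {T m : ℝ}
    (hT : 0 < T) (hm : 0 < m) :
    ∫ v, maxwellian d n u T m v = n := by
  have hb : 0 < m / (2 * T) := by positivity
  simp_rw [bgk_aux_maxwellian_eq d n u hT hm]
  rw [integral_const_mul, integral_sub_right_eq_self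
    (fun w : E d => rexp (-(m / (2 * T)) * ‖w‖ ^ 2)) u, bgk_aux_integral_exp d hb]
  have hbase : π / (m / (2 * T)) = 2 * π * T / m := by field_simp
  rw [hbase, div_mul_cancel₀]
  positivity

lemma bgk_aux_integral_sq_maxwellian (d : ℕ) (hd : 1 ≤ d) (n : ℝ) (u : E d) {T m : ℝ}
    (hT : 0 < T) (hm : 0 < m) :
    ∫ v, ‖v‖ ^ 2 * maxwellian d n u T m v = n * ((d : ℝ) * T / m + ‖u‖ ^ 2) := by
  have hb : 0 < m / (2 * T) := by positivity
  set b := m / (2 * T) with hbdef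
  set C := n / (2 * π * T / m) ^ ((d : ℝ) / 2) with hC
  have key : (fun v : E d => ‖v‖ ^ 2 * maxwellian d n u T m v)
      = fun v : E d => (fun w : E d => ‖w + u‖ ^ 2 * (C * rexp (-b * ‖w‖ ^ 2))) (v - u) := by
    funext v
    simp only [sub_add_cancel]
    rw [bgk_aux_maxwellian_eq d n u hT hm v]
  rw [key, integral_sub_right_eq_self (fun w : E d => ‖w + u‖ ^ 2 * (C * rexp (-b * ‖w‖ ^ 2))) u]
  have heq : (fun w : E d => ‖w + u‖ ^ 2 * (C * rexp (-b * ‖w‖ ^ 2)))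
      = fun w : E d => C * (‖w‖ ^ 2 * rexp (-b * ‖w‖ ^ 2))
        + ((2 * C) * ((inner ℝ u w : ℝ) * rexp (-b * ‖w‖ ^ 2))
          + (C * ‖u‖ ^ 2) * rexp (-b * ‖w‖ ^ 2)) := by
    funext w
    rw [norm_add_sq_real, real_inner_comm]
    ring
  rw [heq, integral_add, integral_add, integral_const_mul, integral_const_mul,
    integral_const_mul, bgk_aux_integral_sq_exp d hd hb, bgk_aux_integral_inner_exp,
    bgk_aux_integral_exp d hb]
  · have hbase : π / b = 2 * π * T / m := by rw [hbdef]; field_simp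
    have hCn : C * (π / b) ^ ((d:ℝ)/2) = n := by
      rw [hbase, hC, div_mul_cancel₀]
      positivity
    have hhalf : (d : ℝ) / (2 * b) = (d : ℝ) * T / m := by rw [hbdef]; field_simp
    calc C * ((d:ℝ) / (2*b) * (π/b) ^ ((d:ℝ)/2)) + (2*C*0 + C*‖u‖^2 * (π/b)^((d:ℝ)/2))
        = ((d:ℝ)/(2*b)) * (C * (π/b)^((d:ℝ)/2)) + ‖u‖^2 * (C * (π/b)^((d:ℝ)/2)) := by ring
      _ = n * ((d : ℝ) * T / m + ‖u‖ ^ 2) := by rw [hCn, hhalf]; ring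
  · exact (bgk_aux_integrable_inner_exp d u hb).const_mul _
  · exact (bgk_aux_integrable_exp d hb).const_mul _
  · exact (bgk_aux_integrable_sq_exp d hb).const_mul _
  · exact ((bgk_aux_integrable_inner_exp d u hb).const_mul _).add
      ((bgk_aux_integrable_exp d hb).const_mul _)

open RealInnerProductSpace in
lemma bgk_aux_f_moment (d : ℕ) {n T m : ℝ} (hm : 0 < m) (u : E d)
    {f : EuclideanSpace ℝ (Fin d) → ℝ}
    (hfpos : ∀ v, 0 ≤ f v)
    (hfint : Integrable (fun v => (1 + ‖v‖ ^ 2) * f v))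
    (hfn : (∫ v, f v) = n) (hfu : (∫ v, f v • v) = n • u)
    (hfT : (∫ v, m * ‖v - u‖ ^ 2 * f v) = d * n * T) :
    Integrable (fun v => ‖v‖ ^ 2 * f v) ∧
      (∫ v, m * ‖v‖ ^ 2 * f v) = d * n * T + m * n * ‖u‖ ^ 2 := by
  have hcont : Continuous (fun v : E d => (1 + ‖v‖ ^ 2)⁻¹) := by
    refine Continuous.inv₀ (by continuity) fun v => by positivity
  have hmeas : AEStronglyMeasurable f (volume : Measure (E d)) := by
    have h1 := hfint.aestronglyMeasurable
    have heq : f = fun v => ((1 + ‖v‖ ^ 2) * f v) * (1 + ‖v‖ ^ 2)⁻¹ := by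
      funext v
      have : (1 : ℝ) + ‖v‖ ^ 2 ≠ 0 := by positivity
      field_simp
    rw [heq]
    exact h1.mul hcont.aestronglyMeasurable
  have hbound : ∀ v : E d, ‖v‖ ≤ 1 + ‖v‖ ^ 2 := fun v => by
    nlinarith [norm_nonneg v, sq_nonneg (‖v‖ - 1)]
  have int_f : Integrable f := by
    refine hfint.mono' hmeas (Filter.Eventually.of_forall fun v => ?_)
    rw [Real.norm_eq_abs, abs_of_nonneg (hfpos v)]
    nlinarith [hfpos v, sq_nonneg ‖v‖]
  have int_sqf : Integrable (fun v => ‖v‖ ^ 2 * f v) := by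
    refine hfint.mono' (((continuous_norm.pow 2).aestronglyMeasurable).mul hmeas)
      (Filter.Eventually.of_forall fun v => ?_)
    rw [Real.norm_eq_abs, abs_of_nonneg (mul_nonneg (by positivity) (hfpos v))]
    nlinarith [hfpos v, sq_nonneg ‖v‖]
  have int_vf : Integrable (fun v => f v • v) := by
    refine hfint.mono' (hmeas.smul aestronglyMeasurable_id)
      (Filter.Eventually.of_forall fun v => ?_)
    rw [norm_smul, Real.norm_eq_abs, abs_of_nonneg (hfpos v)]
    calc f v * ‖v‖ ≤ f v * (1 + ‖v‖ ^ 2) := mul_le_mul_of_nonneg_left (hbound v) (hfpos v)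
      _ = (1 + ‖v‖ ^ 2) * f v := by ring
  have int_inner : Integrable (fun v => ⟪u, v⟫ * f v) := by
    refine (hfint.const_mul ‖u‖).mono'
      (((continuous_const.inner continuous_id).aestronglyMeasurable).mul hmeas)
      (Filter.Eventually.of_forall fun v => ?_)
    rw [Real.norm_eq_abs, abs_mul, abs_of_nonneg (hfpos v)]
    calc |⟪u, v⟫| * f v ≤ (‖u‖ * ‖v‖) * f v :=
          mul_le_mul_of_nonneg_right (abs_real_inner_le_norm u v) (hfpos v)
      _ ≤ (‖u‖ * (1 + ‖v‖ ^ 2)) * f v := by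
          have := mul_le_mul_of_nonneg_left (hbound v) (norm_nonneg u)
          exact mul_le_mul_of_nonneg_right this (hfpos v)
      _ = ‖u‖ * ((1 + ‖v‖ ^ 2) * f v) := by ring
  have int_subf : Integrable (fun v => ‖v - u‖ ^ 2 * f v) := by
    refine (hfint.const_mul (2 + 2 * ‖u‖ ^ 2)).mono'
      (((continuous_norm.comp (continuous_id.sub continuous_const)).pow 2).aestronglyMeasurable.mul
        hmeas)
      (Filter.Eventually.of_forall fun v => ?_)
    rw [Real.norm_eq_abs, abs_of_nonneg (mul_nonneg (by positivity) (hfpos v))]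
    have h1 : ‖v - u‖ ^ 2 ≤ 2 * ‖v‖ ^ 2 + 2 * ‖u‖ ^ 2 := by
      have h := norm_sub_le v u
      nlinarith [norm_nonneg v, norm_nonneg u, sq_nonneg (‖v‖ - ‖u‖), norm_nonneg (v - u),
        mul_self_le_mul_self (norm_nonneg (v - u)) h]
    calc ‖v - u‖ ^ 2 * f v ≤ (2 * ‖v‖ ^ 2 + 2 * ‖u‖ ^ 2) * f v :=
          mul_le_mul_of_nonneg_right h1 (hfpos v)
      _ ≤ ((2 + 2 * ‖u‖ ^ 2) * (1 + ‖v‖ ^ 2)) * f v := by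
          refine mul_le_mul_of_nonneg_right ?_ (hfpos v)
          nlinarith [sq_nonneg ‖v‖, sq_nonneg ‖u‖]
      _ = (2 + 2 * ‖u‖ ^ 2) * ((1 + ‖v‖ ^ 2) * f v) := by ring
  have h_inner : (∫ v, ⟪u, v⟫ * f v) = n * ‖u‖ ^ 2 := by
    have h1 : (∫ v, ⟪u, f v • v⟫) = ⟪u, ∫ v, f v • v⟫ := integral_inner int_vf u
    rw [hfu, real_inner_smul_right, real_inner_self_eq_norm_mul_norm] at h1
    have h2 : (fun v : E d => ⟪u, f v • v⟫) = fun v => ⟪u, v⟫ * f v := by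
      funext v; rw [real_inner_smul_right]; ring
    rw [h2] at h1
    rw [h1]; ring
  refine ⟨int_sqf, ?_⟩
  have hpt : (fun v : E d => m * ‖v‖ ^ 2 * f v)
      = fun v => (m * (‖v - u‖ ^ 2 * f v) + (2 * m) * (⟪u, v⟫ * f v))
          - (m * ‖u‖ ^ 2) * f v := by
    funext v
    have : ‖v - u‖ ^ 2 = ‖v‖ ^ 2 - 2 * ⟪v, u⟫ + ‖u‖ ^ 2 := norm_sub_sq_real v u
    rw [this, real_inner_comm v u]
    ring
  have hA : Integrable (fun v : E d => m * (‖v - u‖ ^ 2 * f v) + 2 * m * (⟪u, v⟫ * f v)) :=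
    (int_subf.const_mul m).add (int_inner.const_mul (2*m))
  have hB : Integrable (fun v : E d => (m * ‖u‖ ^ 2) * f v) := int_f.const_mul (m * ‖u‖ ^ 2)
  rw [hpt, integral_sub hA hB,
    integral_add (int_subf.const_mul m) (int_inner.const_mul (2*m)),
    integral_const_mul, integral_const_mul, integral_const_mul, h_inner, hfn]
  have hT' : (∫ v, ‖v - u‖ ^ 2 * f v) = d * n * T / m := by
    have : (fun v : E d => m * ‖v - u‖ ^ 2 * f v) = fun v => m * (‖v - u‖ ^ 2 * f v) := by
      funext v; ring
    rw [this, integral_const_mul] at hfT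
    field_simp at hfT ⊢
    linarith
  rw [hT']
  field_simp
  ring


open RealInnerProductSpace

/-- Conservation of total energy for the two-species BGK model: with the mixture
parameters `u12, u21, T12, T21` as defined (and assumed positive temperatures), the total
energy exchange `ν12 n2 ∫ m1 |v|² (M12 − f1) dv + ν21 n1 ∫ m2 |v|² (M21 − f2) dv`
vanishes. -/
theorem bgk_mixture_total_energy_conservation
    (d : ℕ) (hd : 1 ≤ d)
    (m1 m2 : ℝ) (hm1 : 0 < m1) (hm2 : 0 < m2)
    (n1 n2 : ℝ) (hn1 : 0 < n1) (hn2 : 0 < n2)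
    (u1 u2 : EuclideanSpace ℝ (Fin d)) (T1 T2 : ℝ) (hT1 : 0 < T1) (hT2 : 0 < T2)
    (ε : ℝ) (hε0 : 0 < ε) (hε1 : ε ≤ 1)
    (ν21 : ℝ) (hν21 : 0 < ν21) (ν12 : ℝ) (hν12 : ν12 = ε * ν21)
    (δ α γ : ℝ)
    (u12 : EuclideanSpace ℝ (Fin d)) (hu12 : u12 = δ • u1 + (1 - δ) • u2)
    (u21 : EuclideanSpace ℝ (Fin d))
    (hu21 : u21 = u2 - ((m1 / m2) * ε * (1 - δ)) • (u2 - u1))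
    (T12 : ℝ) (hT12 : T12 = α * T1 + (1 - α) * T2 + γ * ‖u1 - u2‖ ^ 2)
    (T21 : ℝ)
    (hT21 : T21 = ((1 / d) * ε * m1 * (1 - δ) * ((m1 / m2) * ε * (δ - 1) + δ + 1) - ε * γ)
        * ‖u1 - u2‖ ^ 2 + ε * (1 - α) * T1 + (1 - ε * (1 - α)) * T2)
    (hT12pos : 0 < T12) (hT21pos : 0 < T21)
    (f1 f2 : EuclideanSpace ℝ (Fin d) → ℝ)
    (hf1pos : ∀ v, 0 ≤ f1 v) (hf2pos : ∀ v, 0 ≤ f2 v)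
    (hf1int : Integrable (fun v => (1 + ‖v‖ ^ 2) * f1 v))
    (hf2int : Integrable (fun v => (1 + ‖v‖ ^ 2) * f2 v))
    (hf1n : (∫ v, f1 v) = n1) (hf2n : (∫ v, f2 v) = n2)
    (hf1u : (∫ v, f1 v • v) = n1 • u1) (hf2u : (∫ v, f2 v • v) = n2 • u2)
    (hf1T : (∫ v, m1 * ‖v - u1‖ ^ 2 * f1 v) = d * n1 * T1)
    (hf2T : (∫ v, m2 * ‖v - u2‖ ^ 2 * f2 v) = d * n2 * T2) :
    ν12 * n2 * (∫ v, m1 * ‖v‖ ^ 2 * (maxwellian d n1 u12 T12 m1 v - f1 v))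
      + ν21 * n1 * (∫ v, m2 * ‖v‖ ^ 2 * (maxwellian d n2 u21 T21 m2 v - f2 v)) = 0 := by
  obtain ⟨int_sqf1, hmom1⟩ := bgk_aux_f_moment d hm1 u1 hf1pos hf1int hf1n hf1u hf1T
  obtain ⟨int_sqf2, hmom2⟩ := bgk_aux_f_moment d hm2 u2 hf2pos hf2int hf2n hf2u hf2T
  have I1 : (∫ v, m1 * ‖v‖ ^ 2 * (maxwellian d n1 u12 T12 m1 v - f1 v))
      = ((d : ℝ) * n1 * T12 + m1 * n1 * ‖u12‖ ^ 2)
        - ((d : ℝ) * n1 * T1 + m1 * n1 * ‖u1‖ ^ 2) := by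
    have hsplit : (fun v : EuclideanSpace ℝ (Fin d) =>
        m1 * ‖v‖ ^ 2 * (maxwellian d n1 u12 T12 m1 v - f1 v))
        = fun v => m1 * (‖v‖ ^ 2 * maxwellian d n1 u12 T12 m1 v) - m1 * (‖v‖ ^ 2 * f1 v) := by
      funext v; ring
    have hMint := bgk_aux_integrable_sq_maxwellian d n1 u12 hT12pos hm1
    rw [hsplit, integral_sub (hMint.const_mul m1) (int_sqf1.const_mul m1),
      integral_const_mul, integral_const_mul,
      bgk_aux_integral_sq_maxwellian d hd n1 u12 hT12pos hm1]
    have hf' : m1 * ∫ v, ‖v‖ ^ 2 * f1 v = (d : ℝ) * n1 * T1 + m1 * n1 * ‖u1‖ ^ 2 := by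
      rw [← integral_const_mul]
      rw [← hmom1]
      congr 1; funext v; ring
    rw [hf']
    field_simp
  have I2 : (∫ v, m2 * ‖v‖ ^ 2 * (maxwellian d n2 u21 T21 m2 v - f2 v))
      = ((d : ℝ) * n2 * T21 + m2 * n2 * ‖u21‖ ^ 2)
        - ((d : ℝ) * n2 * T2 + m2 * n2 * ‖u2‖ ^ 2) := by
    have hsplit : (fun v : EuclideanSpace ℝ (Fin d) =>
        m2 * ‖v‖ ^ 2 * (maxwellian d n2 u21 T21 m2 v - f2 v))
        = fun v => m2 * (‖v‖ ^ 2 * maxwellian d n2 u21 T21 m2 v) - m2 * (‖v‖ ^ 2 * f2 v) := by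
      funext v; ring
    have hMint := bgk_aux_integrable_sq_maxwellian d n2 u21 hT21pos hm2
    rw [hsplit, integral_sub (hMint.const_mul m2) (int_sqf2.const_mul m2),
      integral_const_mul, integral_const_mul,
      bgk_aux_integral_sq_maxwellian d hd n2 u21 hT21pos hm2]
    have hf' : m2 * ∫ v, ‖v‖ ^ 2 * f2 v = (d : ℝ) * n2 * T2 + m2 * n2 * ‖u2‖ ^ 2 := by
      rw [← integral_const_mul]
      rw [← hmom2]
      congr 1; funext v; ring
    rw [hf']
    field_simp
  rw [I1, I2]
  -- norm expansions
  have hA12 : ‖u12‖ ^ 2 = δ ^ 2 * ‖u1‖ ^ 2 + 2 * (δ * (1 - δ)) * ⟪u1, u2⟫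
      + (1 - δ) ^ 2 * ‖u2‖ ^ 2 := by
    rw [hu12, norm_add_sq_real, norm_smul, norm_smul, real_inner_smul_left,
      real_inner_smul_right, mul_pow, mul_pow]
    simp only [Real.norm_eq_abs, sq_abs]
    ring
  have hA21 : ‖u21‖ ^ 2 = ‖u2‖ ^ 2
      - 2 * ((m1 / m2) * ε * (1 - δ)) * (‖u2‖ ^ 2 - ⟪u1, u2⟫)
      + ((m1 / m2) * ε * (1 - δ)) ^ 2 * (‖u2‖ ^ 2 - 2 * ⟪u1, u2⟫ + ‖u1‖ ^ 2) := by
    rw [hu21, norm_sub_sq_real, norm_smul, mul_pow, real_inner_smul_right,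
      inner_sub_right, real_inner_self_eq_norm_sq, norm_sub_sq_real u2 u1,
      real_inner_comm u2 u1]
    simp only [Real.norm_eq_abs, sq_abs]
    ring
  have hs : ‖u1 - u2‖ ^ 2 = ‖u1‖ ^ 2 - 2 * ⟪u1, u2⟫ + ‖u2‖ ^ 2 := norm_sub_sq_real u1 u2
  have hd0 : ((d : ℝ)) ≠ 0 := by positivity
  rw [hν12, hA12, hA21, hT12, hT21, hs]
  field_simp
  ring
end

section
/- (Positivity of the mixture temperatures.) Let d ≥ 1, m1, m2 > 0, 0 < ε ≤ 1, T1, T2 > 0, u1, u2 ∈ ℝ^d, and let δ, α, γ satisfy the parameter constraints ((m1/m2)ε − 1)/(1 + (m1/m2)ε) ≤ δ ≤ 1, 0 ≤ α ≤ 1, 0 ≤ γ ≤ (m1/d)(1−δ)[(1 + (m1/m2)ε) δ + 1 − (m1/m2)ε]. Then both mixture temperatures are positive: T12 = α T1 + (1−α) T2 + γ |u1 − u2|² > 0 and T21 = [ (1/d) ε m1 (1−δ)( (m1/m2) ε (δ−1) + δ + 1 ) − ε γ ] |u1 − u2|² + ε (1−α) T1 + (1 − ε(1−α)) T2 > 0.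 -/
open Real

/-- Positivity of the mixture temperatures: under the parameter constraints on `δ`, `α`, `γ`
both mixture temperatures `T12` and `T21` are positive. -/
theorem bgk_mixture_temperatures_positive
    (d : ℕ) (hd : 1 ≤ d)
    (m1 m2 : ℝ) (hm1 : 0 < m1) (hm2 : 0 < m2)
    (ε : ℝ) (hε0 : 0 < ε) (hε1 : ε ≤ 1)
    (T1 T2 : ℝ) (hT1 : 0 < T1) (hT2 : 0 < T2)
    (u1 u2 : EuclideanSpace ℝ (Fin d))
    (δ α γ : ℝ)
    (hδlow : ((m1 / m2) * ε - 1) / (1 + (m1 / m2) * ε) ≤ δ) (hδhigh : δ ≤ 1)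
    (hα0 : 0 ≤ α) (hα1 : α ≤ 1)
    (hγ0 : 0 ≤ γ)
    (hγhigh : γ ≤ (m1 / d) * (1 - δ) * ((1 + (m1 / m2) * ε) * δ + 1 - (m1 / m2) * ε)) :
    0 < α * T1 + (1 - α) * T2 + γ * ‖u1 - u2‖ ^ 2 ∧
    0 < ((1 / d) * ε * m1 * (1 - δ) * ((m1 / m2) * ε * (δ - 1) + δ + 1) - ε * γ)
          * ‖u1 - u2‖ ^ 2 + ε * (1 - α) * T1 + (1 - ε * (1 - α)) * T2 := by
  have hs : (0:ℝ) ≤ ‖u1 - u2‖ ^ 2 := by positivity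
  have hD : (1:ℝ) ≤ (d:ℝ) := by exact_mod_cast hd
  have hD0 : (0:ℝ) < (d:ℝ) := by linarith
  constructor
  · nlinarith [mul_nonneg hγ0 hs, mul_nonneg hα0 hT1.le, mul_nonneg (sub_nonneg.mpr hα1) hT2.le]
  · have hcoef : 0 ≤ (1 / (d:ℝ)) * ε * m1 * (1 - δ) * ((m1 / m2) * ε * (δ - 1) + δ + 1) - ε * γ := by
      have h2 : γ ≤ (1 / (d:ℝ)) * m1 * (1 - δ) * ((m1 / m2) * ε * (δ - 1) + δ + 1) := by
        have : (m1 / (d:ℝ)) * (1 - δ) * ((1 + (m1 / m2) * ε) * δ + 1 - (m1 / m2) * ε)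
            = (1 / (d:ℝ)) * m1 * (1 - δ) * ((m1 / m2) * ε * (δ - 1) + δ + 1) := by
          ring
        linarith [hγhigh, this ▸ hγhigh]
      nlinarith [mul_le_mul_of_nonneg_left h2 hε0.le]
    have hεα : ε * (1 - α) ≤ 1 := by nlinarith
    have hεα0 : 0 ≤ ε * (1 - α) := by nlinarith
    nlinarith [mul_nonneg hcoef hs, mul_nonneg hεα0 hT1.le, mul_nonneg (sub_nonneg.mpr hεα) hT2.le]
end

section
/- (Exponential decay of the velocity difference.) Let d ≥ 1, and let n1, n2, ν12 > 0, m1, m2 > 0, δ < 1 be constants. Suppose u1, u2 : [0,∞) → ℝ^d are differentiable and satisfy the macroscopic equations of the space-homogeneous two-species BGK model: u1'(t) = ν12 n2 (1−δ)(u2(t) − u1(t)) and u2'(t) = −ν12 n1 (m1/m2)(1−δ)(u2(t) − u1(t)) for all t ≥ 0. Then for all t ≥ 0: |u1(t) − u2(t)|² = e^{−2 ν12 (1−δ)(n2 + (m1/m2) n1) t} |u1(0) − u2(0)|². -/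
open Real

/-- Exponential decay of the velocity difference in the space-homogeneous two-species
BGK model: if `u1' = ν12 n2 (1−δ)(u2 − u1)` and `u2' = −ν12 n1 (m1/m2)(1−δ)(u2 − u1)`
for all `t ≥ 0`, then
`|u1(t) − u2(t)|² = e^{−2 ν12 (1−δ)(n2 + (m1/m2) n1) t} |u1(0) − u2(0)|²`. -/
theorem bgk_mixture_velocity_decay
    (d : ℕ) (hd : 1 ≤ d)
    (n1 n2 ν12 m1 m2 δ : ℝ)
    (hn1 : 0 < n1) (hn2 : 0 < n2) (hν12 : 0 < ν12) (hm1 : 0 < m1) (hm2 : 0 < m2)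
    (hδ : δ < 1)
    (u1 u2 : ℝ → EuclideanSpace ℝ (Fin d))
    (hu1diff : Differentiable ℝ u1) (hu2diff : Differentiable ℝ u2)
    (hu1 : ∀ t : ℝ, 0 ≤ t →
      HasDerivAt u1 ((ν12 * n2 * (1 - δ)) • (u2 t - u1 t)) t)
    (hu2 : ∀ t : ℝ, 0 ≤ t →
      HasDerivAt u2 (-((ν12 * n1 * (m1 / m2) * (1 - δ))) • (u2 t - u1 t)) t) :
    ∀ t : ℝ, 0 ≤ t →
      ‖u1 t - u2 t‖ ^ 2
        = Real.exp (-2 * ν12 * (1 - δ) * (n2 + (m1 / m2) * n1) * t)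
            * ‖u1 0 - u2 0‖ ^ 2 := by
  set c : ℝ := ν12 * (1 - δ) * (n2 + (m1 / m2) * n1) with hc
  set w : ℝ → EuclideanSpace ℝ (Fin d) := fun s => u1 s - u2 s with hw
  have hwderiv : ∀ s : ℝ, 0 ≤ s → HasDerivAt w (-c • w s) s := by
    intro s hs
    have h := (hu1 s hs).sub (hu2 s hs)
    convert h using 1
    show -c • (u1 s - u2 s) = _
    rw [hc]
    module
    all_goals rfl
  set f : ℝ → ℝ := fun s => Real.exp (2 * c * s) * ‖w s‖ ^ 2 with hf
  have hfderiv : ∀ s : ℝ, 0 ≤ s → HasDerivAt f 0 s := by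
    intro s hs
    have he : HasDerivAt (fun s : ℝ => Real.exp (2 * c * s))
        (2 * c * Real.exp (2 * c * s)) s := by
      simpa [mul_comm] using ((hasDerivAt_id s).const_mul (2 * c)).exp
    have hn : HasDerivAt (fun s => ‖w s‖ ^ 2)
        (2 * (inner ℝ (-c • w s) (w s) : ℝ)) s := by
      have hi : HasDerivAt (fun s => (inner ℝ (w s) (w s) : ℝ))
          ((inner ℝ (w s) (-c • w s) : ℝ) + (inner ℝ (-c • w s) (w s) : ℝ)) s :=
        (hwderiv s hs).inner ℝ (hwderiv s hs)
      have heq : (fun s => ‖w s‖ ^ 2) = fun s => (inner ℝ (w s) (w s) : ℝ) := by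
        funext x; rw [real_inner_self_eq_norm_sq]
      rw [heq]
      convert hi using 1
      rw [real_inner_comm (w s) (-c • w s)]; ring
    have := he.mul hn
    refine this.congr_deriv ?_
    have h1 : (inner ℝ (-c • w s) (w s) : ℝ) = -c * ‖w s‖ ^ 2 := by
      rw [real_inner_smul_left, real_inner_self_eq_norm_sq]
    rw [h1]; ring
  have key : ∀ t : ℝ, 0 ≤ t → f t = f 0 := by
    intro t ht
    have hcont : ContinuousOn f (Set.Icc 0 t) := by
      apply Continuous.continuousOn
      exact (Real.continuous_exp.comp (continuous_const.mul continuous_id)).mul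
        ((hu1diff.sub hu2diff).continuous.norm.pow 2)
    exact constant_of_has_deriv_right_zero hcont
      (fun x hx => (hfderiv x hx.1).hasDerivWithinAt) t (Set.right_mem_Icc.mpr ht)
  intro t ht
  have h := key t ht
  simp only [hf] at h
  rw [show Real.exp (2 * c * 0) = 1 by simp, one_mul] at h
  have hpos : Real.exp (2 * c * t) ≠ 0 := (Real.exp_pos _).ne'
  have hfin : ‖w t‖ ^ 2 = (Real.exp (2 * c * t))⁻¹ * ‖w 0‖ ^ 2 := by
    field_simp
    linarith [h]
  rw [show w t = u1 t - u2 t from rfl, show w 0 = u1 0 - u2 0 from rfl] at hfin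
  rw [hfin, ← Real.exp_neg]
  congr 2
  rw [hc]; ring
end

section
/- (Exponential decay of the temperature difference.) Let d ≥ 1 and let n1, n2, ν12 > 0, m1, m2 > 0, δ < 1, α, γ be constants. Define C1 = (1−α) ν12 (n2 + n1), C2 = ν12 ( n2 ((1−δ)² + γ/m1) − n1 (1 − δ² − γ/m1) ), C3 = 2 ν12 (1−δ)(n2 + (m1/m2) n1), and assume C1 ≠ C3. Suppose u1, u2 : [0,∞) → ℝ^d are differentiable with u1'(t) = ν12 n2 (1−δ)(u2(t) − u1(t)) and u2'(t) = −ν12 n1 (m1/m2)(1−δ)(u2(t) − u1(t)), and T1, T2 : [0,∞) → ℝ are differentiable with (T1 − T2)'(t) = −C1 (T1(t) − T2(t)) + C2 |u1(t) − u2(t)|² for all t ≥ 0. Then for all t ≥ 0: T1(t) − T2(t) = e^{−C1 t} [ T1(0) − T2(0) + (C2/(C1 − C3)) ( e^{(C1 − C3) t} − 1 ) |u1(0) − u2(0)|² ]. -/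
open Real

/-- A function whose derivative vanishes on `[0, ∞)` is constant there. -/
lemma const_of_deriv_zero_aux {E : Type*} [NormedAddCommGroup E] [NormedSpace ℝ E]
    (f : ℝ → E) (h : ∀ t : ℝ, 0 ≤ t → HasDerivAt f 0 t) :
    ∀ t : ℝ, 0 ≤ t → f t = f 0 := by
  intro t ht
  have hcont : ContinuousOn f (Set.Icc 0 t) := fun x hx =>
    ((h x hx.1).continuousAt).continuousWithinAt
  have hderiv : ∀ x ∈ Set.Ico (0:ℝ) t, HasDerivWithinAt f 0 (Set.Ici x) x := fun x hx =>
    (h x hx.1).hasDerivWithinAt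
  exact constant_of_has_deriv_right_zero hcont hderiv t ⟨ht, le_rfl⟩

/-- derivative of `exp (c * t)`. -/
lemma hasDerivAt_exp_mul (c t : ℝ) :
    HasDerivAt (fun s : ℝ => Real.exp (c * s)) (c * Real.exp (c * t)) t := by
  have h := (Real.hasDerivAt_exp (c * t)).comp t ((hasDerivAt_id t).const_mul c)
  simpa [mul_comm, Function.comp_def] using h

/-- Exponential decay of the temperature difference in the space-homogeneous two-species
BGK model: with `C1 = (1−α) ν12 (n2 + n1)`,
`C2 = ν12 (n2 ((1−δ)² + γ/m1) − n1 (1 − δ² − γ/m1))`,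
`C3 = 2 ν12 (1−δ)(n2 + (m1/m2) n1)`, `C1 ≠ C3`, if the velocities satisfy the
macroscopic ODEs and `(T1 − T2)' = −C1 (T1 − T2) + C2 |u1 − u2|²`, then
`T1(t) − T2(t) = e^{−C1 t} [T1(0) − T2(0) + (C2/(C1−C3))(e^{(C1−C3)t} − 1)|u1(0) − u2(0)|²]`. -/
theorem bgk_mixture_temperature_decay
    (d : ℕ) (hd : 1 ≤ d)
    (n1 n2 ν12 m1 m2 δ α γ : ℝ)
    (hn1 : 0 < n1) (hn2 : 0 < n2) (hν12 : 0 < ν12) (hm1 : 0 < m1) (hm2 : 0 < m2)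
    (hδ : δ < 1)
    (C1 C2 C3 : ℝ)
    (hC1 : C1 = (1 - α) * ν12 * (n2 + n1))
    (hC2 : C2 = ν12 * (n2 * ((1 - δ) ^ 2 + γ / m1) - n1 * (1 - δ ^ 2 - γ / m1)))
    (hC3 : C3 = 2 * ν12 * (1 - δ) * (n2 + (m1 / m2) * n1))
    (hC : C1 ≠ C3)
    (u1 u2 : ℝ → EuclideanSpace ℝ (Fin d))
    (hu1diff : Differentiable ℝ u1) (hu2diff : Differentiable ℝ u2)
    (hu1 : ∀ t : ℝ, 0 ≤ t →
      HasDerivAt u1 ((ν12 * n2 * (1 - δ)) • (u2 t - u1 t)) t)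
    (hu2 : ∀ t : ℝ, 0 ≤ t →
      HasDerivAt u2 (-((ν12 * n1 * (m1 / m2) * (1 - δ))) • (u2 t - u1 t)) t)
    (T1 T2 : ℝ → ℝ)
    (hT1diff : Differentiable ℝ T1) (hT2diff : Differentiable ℝ T2)
    (hT : ∀ t : ℝ, 0 ≤ t →
      HasDerivAt (fun s => T1 s - T2 s)
        (-C1 * (T1 t - T2 t) + C2 * ‖u1 t - u2 t‖ ^ 2) t) :
    ∀ t : ℝ, 0 ≤ t →
      T1 t - T2 t
        = Real.exp (-C1 * t) * (T1 0 - T2 0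
            + C2 / (C1 - C3) * (Real.exp ((C1 - C3) * t) - 1) * ‖u1 0 - u2 0‖ ^ 2) := by
  set c : ℝ := C3 / 2 with hc
  -- Step 1: velocity difference decays: u1 t - u2 t = exp(-c t) • (u1 0 - u2 0)
  have hw : ∀ t : ℝ, 0 ≤ t →
      HasDerivAt (fun s => u1 s - u2 s) ((-c) • (u1 t - u2 t)) t := by
    intro t ht
    have h := (hu1 t ht).sub (hu2 t ht)
    have : (ν12 * n2 * (1 - δ)) • (u2 t - u1 t)
        - (-(ν12 * n1 * (m1 / m2) * (1 - δ))) • (u2 t - u1 t)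
        = (-c) • (u1 t - u2 t) := by
      rw [← sub_smul]
      have : u2 t - u1 t = (-1 : ℝ) • (u1 t - u2 t) := by
        rw [neg_one_smul]; abel
      rw [this, smul_smul]
      congr 1
      rw [hc, hC3]; ring
    rwa [this] at h
  have hv : ∀ t : ℝ, 0 ≤ t →
      Real.exp (c * t) • (u1 t - u2 t) = u1 0 - u2 0 := by
    have := const_of_deriv_zero_aux (fun s => Real.exp (c * s) • (u1 s - u2 s)) ?_
    · intro t ht
      have h := this t ht
      simpa using h
    · intro t ht
      have h := (hasDerivAt_exp_mul c t).smul (hw t ht)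
      have e : Real.exp (c * t) • ((-c) • (u1 t - u2 t))
          + (c * Real.exp (c * t)) • (u1 t - u2 t) = 0 := by
        rw [smul_smul, ← add_smul]
        have : Real.exp (c * t) * -c + c * Real.exp (c * t) = 0 := by ring
        rw [this, zero_smul]
      rwa [e] at h
  have hnorm : ∀ t : ℝ, 0 ≤ t →
      ‖u1 t - u2 t‖ ^ 2 = Real.exp (-C3 * t) * ‖u1 0 - u2 0‖ ^ 2 := by
    intro t ht
    have h := hv t ht
    have : ‖u1 0 - u2 0‖ ^ 2 = (Real.exp (c * t)) ^ 2 * ‖u1 t - u2 t‖ ^ 2 := by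
      rw [← h, norm_smul, mul_pow]
      congr 1
      rw [Real.norm_eq_abs, abs_of_pos (Real.exp_pos _)]
    have hcoef : Real.exp (-C3 * t) * Real.exp (c * t) ^ 2 = 1 := by
      rw [sq, ← Real.exp_add, ← Real.exp_add]
      have h0 : -C3 * t + (c * t + c * t) = 0 := by rw [hc]; ring
      rw [h0, Real.exp_zero]
    rw [this, ← mul_assoc, hcoef, one_mul]
  -- Step 2: the auxiliary function ψ is constant
  set A : ℝ := C2 / (C1 - C3) with hA
  have hCne : C1 - C3 ≠ 0 := sub_ne_zero.mpr hC
  set ψ : ℝ → ℝ := fun s => Real.exp (C1 * s) * (T1 s - T2 s)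
      - A * Real.exp ((C1 - C3) * s) * ‖u1 0 - u2 0‖ ^ 2 with hψ
  have hψd : ∀ t : ℝ, 0 ≤ t → HasDerivAt ψ 0 t := by
    intro t ht
    have h1 := (hasDerivAt_exp_mul C1 t).mul (hT t ht)
    have h2 := ((hasDerivAt_exp_mul (C1 - C3) t).const_mul A).mul_const (‖u1 0 - u2 0‖ ^ 2)
    have h := h1.sub h2
    have e : C1 * Real.exp (C1 * t) * (T1 t - T2 t)
        + Real.exp (C1 * t) * (-C1 * (T1 t - T2 t) + C2 * ‖u1 t - u2 t‖ ^ 2)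
        - A * ((C1 - C3) * Real.exp ((C1 - C3) * t)) * ‖u1 0 - u2 0‖ ^ 2 = 0 := by
      rw [hnorm t ht]
      have hA' : A * (C1 - C3) = C2 := by
        rw [hA]; field_simp
      have : Real.exp (C1 * t) * Real.exp (-C3 * t) = Real.exp ((C1 - C3) * t) := by
        rw [← Real.exp_add]; ring_nf
      linear_combination (C2 * ‖u1 0 - u2 0‖ ^ 2) * this
        - (‖u1 0 - u2 0‖ ^ 2 * Real.exp ((C1 - C3) * t)) * hA'
    have h' : HasDerivAt (fun s => Real.exp (C1 * s) * (T1 s - T2 s)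
        - A * Real.exp ((C1 - C3) * s) * ‖u1 0 - u2 0‖ ^ 2)
        (C1 * Real.exp (C1 * t) * (T1 t - T2 t)
        + Real.exp (C1 * t) * (-C1 * (T1 t - T2 t) + C2 * ‖u1 t - u2 t‖ ^ 2)
        - A * ((C1 - C3) * Real.exp ((C1 - C3) * t)) * ‖u1 0 - u2 0‖ ^ 2) t := by
      exact h
    rw [e] at h'
    exact h'
  have hψc := const_of_deriv_zero_aux ψ hψd
  intro t ht
  have h := hψc t ht
  rw [hψ] at h
  simp only [mul_zero, Real.exp_zero, one_mul, mul_one] at h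
  -- h : exp(C1 t)(T1 t - T2 t) - A exp((C1-C3)t) ‖w0‖² = (T1 0 - T2 0) - A ‖w0‖²
  have hexp : Real.exp (-C1 * t) * Real.exp (C1 * t) = 1 := by
    rw [← Real.exp_add]; ring_nf; exact Real.exp_zero
  calc T1 t - T2 t = Real.exp (-C1 * t) * Real.exp (C1 * t) * (T1 t - T2 t) := by
        rw [hexp, one_mul]
    _ = Real.exp (-C1 * t) * (T1 0 - T2 0
          + A * (Real.exp ((C1 - C3) * t) - 1) * ‖u1 0 - u2 0‖ ^ 2) := by
        linear_combination Real.exp (-C1 * t) * h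
end

section
/- (Key entropy inequality for the mixture Maxwellians.) Let d ≥ 1, m1, m2 > 0, n1, n2 > 0, T1, T2 > 0, u1, u2 ∈ ℝ^d, 0 < ε ≤ 1, ν21 > 0, ν12 = ε ν21, and let δ, α, γ satisfy ((m1/m2)ε − 1)/(1 + (m1/m2)ε) ≤ δ ≤ 1, 0 ≤ α ≤ 1, 0 ≤ γ ≤ (m1/d)(1−δ)[(1 + (m1/m2)ε) δ + 1 − (m1/m2)ε]. Let M1 = M[n1,u1,T1,m1], M2 = M[n2,u2,T2,m2], M12 = M[n1,u12,T12,m1], M21 = M[n2,u21,T21,m2]. Then ν12 n2 H(M12) + ν21 n1 H(M21) ≤ ν12 n2 H(M1) + ν21 n1 H(M2), where H(f) = ∫_{ℝ^d} f ln f dv. -/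
open MeasureTheory Real

/-- The entropy `H(f) = ∫ f ln f dv` of a function on `ℝ^d`. -/
noncomputable def entropy (d : ℕ) (f : EuclideanSpace ℝ (Fin d) → ℝ) : ℝ :=
  ∫ v : EuclideanSpace ℝ (Fin d), f v * Real.log (f v)

lemma bgk_gauss_integrable (d : ℕ) {b : ℝ} (hb : 0 < b) :
    Integrable (fun v : EuclideanSpace ℝ (Fin d) => Real.exp (-b * ‖v‖ ^ 2)) := by
  have h := (GaussianFourier.integrable_cexp_neg_mul_sq_norm_add
    (b := (b : ℂ)) (by simpa using hb) 0 (0 : EuclideanSpace ℝ (Fin d))).norm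
  refine h.congr (Filter.Eventually.of_forall fun v => ?_)
  simp [Complex.norm_exp, ← Complex.ofReal_pow]

lemma bgk_gauss_integral (d : ℕ) {b : ℝ} (hb : 0 < b) :
    ∫ v : EuclideanSpace ℝ (Fin d), Real.exp (-b * ‖v‖ ^ 2) = (π / b) ^ ((d : ℝ) / 2) := by
  rw [GaussianFourier.integral_rexp_neg_mul_sq_norm hb]
  norm_num [finrank_euclideanSpace]

lemma bgk_normsq_gauss_integrable (d : ℕ) :
    Integrable (fun v : EuclideanSpace ℝ (Fin d) =>
      ‖v‖ ^ 2 * Real.exp (-(1/2 : ℝ) * ‖v‖ ^ 2)) := by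
  have h4 := (bgk_gauss_integrable d (b := (1/4 : ℝ)) (by norm_num)).const_mul 4
  refine h4.mono' ?_ (Filter.Eventually.of_forall fun v => ?_)
  · exact (Continuous.mul (by fun_prop) (by fun_prop)).aestronglyMeasurable
  · have h1 : ‖v‖ ^ 2 ≤ 4 * Real.exp ((1/4) * ‖v‖ ^ 2) := by
      nlinarith [Real.add_one_le_exp ((1/4) * ‖v‖ ^ 2)]
    have h2 : (0:ℝ) ≤ ‖v‖ ^ 2 * Real.exp (-(1/2 : ℝ) * ‖v‖ ^ 2) := by positivity
    rw [Real.norm_of_nonneg h2]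
    calc ‖v‖ ^ 2 * Real.exp (-(1/2 : ℝ) * ‖v‖ ^ 2)
        ≤ (4 * Real.exp ((1/4) * ‖v‖ ^ 2)) * Real.exp (-(1/2 : ℝ) * ‖v‖ ^ 2) := by
          exact mul_le_mul_of_nonneg_right h1 (Real.exp_pos _).le
      _ = 4 * Real.exp (-(1/4 : ℝ) * ‖v‖ ^ 2) := by
          rw [mul_assoc, ← Real.exp_add]; ring_nf

lemma bgk_maxwellian_shift (d : ℕ) (n T m : ℝ) (hT : 0 < T) (hm : 0 < m)
    (u w : EuclideanSpace ℝ (Fin d)) :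
    maxwellian d n u T m (u + Real.sqrt (T / m) • w)
      = ((Real.sqrt (T / m)) ^ d)⁻¹ * maxwellian d n 0 1 1 w := by
  have hTm : 0 < T / m := div_pos hT hm
  set s := Real.sqrt (T / m) with hs_def
  have hs : 0 < s := Real.sqrt_pos.2 hTm
  have hs2 : s ^ 2 = T / m := Real.sq_sqrt hTm.le
  have hnorm : ‖(u + s • w) - u‖ ^ 2 = s ^ 2 * ‖w‖ ^ 2 := by
    rw [add_sub_cancel_left, norm_smul, mul_pow]
    rw [Real.norm_eq_abs, abs_of_nonneg hs.le]
  have h2Tm : 2 * T / m = 2 * s ^ 2 := by rw [hs2]; ring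
  have hpow : (2 * π * T / m) ^ ((d : ℝ) / 2) = (2 * π) ^ ((d : ℝ) / 2) * s ^ d := by
    have h1 : 2 * π * T / m = (2 * π) * s ^ 2 := by rw [hs2]; ring
    rw [h1, Real.mul_rpow (by positivity) (by positivity)]
    congr 1
    rw [← Real.rpow_natCast s 2, ← Real.rpow_mul hs.le,
      show ((2:ℕ):ℝ) * ((d:ℝ) / 2) = (d:ℝ) by push_cast; ring]
    exact Real.rpow_natCast s d
  unfold maxwellian
  rw [hnorm, hpow, h2Tm, sub_zero]
  have hexp : -(s ^ 2 * ‖w‖ ^ 2) / (2 * s ^ 2) = -‖w‖ ^ 2 / (2 * 1 / 1) := by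
    field_simp
  rw [hexp]
  have h2pi : (2 * π * 1 / 1 : ℝ) = 2 * π := by ring
  rw [h2pi]
  have hsd : (0:ℝ) < s ^ d := pow_pos hs d
  have h2pd : (0:ℝ) < (2 * π) ^ ((d : ℝ) / 2) := by positivity
  have hkey : n / ((2 * π) ^ ((d : ℝ) / 2) * s ^ d)
      = (s ^ d)⁻¹ * (n / (2 * π) ^ ((d : ℝ) / 2)) := by
    field_simp
  rw [hkey, mul_assoc]

lemma bgk_maxwellian_entropy (d : ℕ) (n T m : ℝ) (hn : 0 < n) (hT : 0 < T) (hm : 0 < m)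
    (u : EuclideanSpace ℝ (Fin d)) :
    entropy d (maxwellian d n u T m)
      = entropy d (maxwellian d n 0 1 1) - ((d : ℝ) / 2) * n * Real.log (T / m) := by
  have hTm : 0 < T / m := div_pos hT hm
  set s := Real.sqrt (T / m) with hs_def
  have hs : 0 < s := Real.sqrt_pos.2 hTm
  have hsd : (0:ℝ) < s ^ d := pow_pos hs d
  set φ := maxwellian d n 0 1 1 with hφ_def
  have h2pd : (0:ℝ) < (2 * π) ^ ((d : ℝ) / 2) := by positivity
  have hCpos : 0 < n / (2 * π) ^ ((d : ℝ) / 2) := div_pos hn h2pd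
  have hC : φ = fun w => (n / (2 * π) ^ ((d : ℝ) / 2)) * Real.exp (-(1/2 : ℝ) * ‖w‖ ^ 2) := by
    funext w
    show maxwellian d n 0 1 1 w = _
    unfold maxwellian
    rw [sub_zero]
    norm_num
    left
    ring
  have hφpos : ∀ w, 0 < φ w := by
    intro w; rw [hC]; positivity
  -- change of variables
  have hstep : ∀ F : EuclideanSpace ℝ (Fin d) → ℝ,
      ∫ v, F v = s ^ d * ∫ w, F (u + s • w) := by
    intro F
    have h1 : (∫ w, F (u + s • w))
        = ∫ x, (fun y => F (u + y)) (s • x) := rfl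
    rw [h1, Measure.integral_comp_smul_of_nonneg volume (fun y => F (u + y)) s (hR := hs.le),
      finrank_euclideanSpace, Fintype.card_fin,
      integral_add_left_eq_self (fun y => F y) u]
    simp only [smul_eq_mul]
    field_simp
  have hpt : ∀ w, maxwellian d n u T m (u + s • w)
        * Real.log (maxwellian d n u T m (u + s • w))
      = (s ^ d)⁻¹ * (φ w * Real.log (φ w) - Real.log (s ^ d) * φ w) := by
    intro w
    rw [bgk_maxwellian_shift d n T m hT hm u w, ← hs_def, ← hφ_def]
    rw [Real.log_mul (inv_ne_zero hsd.ne') (hφpos w).ne', Real.log_inv]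
    ring
  have hint1 : Integrable (fun v : EuclideanSpace ℝ (Fin d) =>
      Real.exp (-(1/2 : ℝ) * ‖v‖ ^ 2)) := bgk_gauss_integrable d (by norm_num)
  have hint2 := bgk_normsq_gauss_integrable d
  have hintφ : Integrable φ := by rw [hC]; exact hint1.const_mul _
  have hintφlog : Integrable (fun w => φ w * Real.log (φ w)) := by
    have heq : (fun w => φ w * Real.log (φ w)) = fun w =>
        (n / (2 * π) ^ ((d : ℝ) / 2)) * Real.log (n / (2 * π) ^ ((d : ℝ) / 2))
            * Real.exp (-(1/2 : ℝ) * ‖w‖ ^ 2)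
          + (-(1/2 : ℝ) * (n / (2 * π) ^ ((d : ℝ) / 2)))
            * (‖w‖ ^ 2 * Real.exp (-(1/2 : ℝ) * ‖w‖ ^ 2)) := by
      funext w
      rw [hC]
      rw [Real.log_mul hCpos.ne' (Real.exp_pos _).ne', Real.log_exp]
      ring
    rw [heq]
    exact (hint1.const_mul _).add (hint2.const_mul _)
  have hφint : ∫ w, φ w = n := by
    rw [hC, integral_const_mul, bgk_gauss_integral d (by norm_num : (0:ℝ) < 1/2)]
    rw [show π / (1/2 : ℝ) = 2 * π by ring]
    field_simp
  have hlogsd : Real.log (s ^ d) = ((d : ℝ) / 2) * Real.log (T / m) := by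
    rw [Real.log_pow, hs_def, Real.log_sqrt hTm.le]
    ring
  calc entropy d (maxwellian d n u T m)
      = s ^ d * ∫ w, maxwellian d n u T m (u + s • w)
          * Real.log (maxwellian d n u T m (u + s • w)) := hstep _
    _ = s ^ d * ∫ w, (s ^ d)⁻¹ * (φ w * Real.log (φ w) - Real.log (s ^ d) * φ w) := by
        congr 1; exact integral_congr_ae (Filter.Eventually.of_forall hpt)
    _ = ∫ w, (φ w * Real.log (φ w) - Real.log (s ^ d) * φ w) := by
        rw [integral_const_mul]; field_simp
    _ = (∫ w, φ w * Real.log (φ w)) - Real.log (s ^ d) * ∫ w, φ w := by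
        rw [integral_sub hintφlog (hintφ.const_mul _), integral_const_mul]
    _ = entropy d (maxwellian d n 0 1 1) - ((d : ℝ) / 2) * n * Real.log (T / m) := by
        rw [hφint, hlogsd, ← hφ_def]
        unfold entropy
        ring

lemma bgk_log_concave2 {a x y : ℝ} (ha0 : 0 ≤ a) (ha1 : a ≤ 1) (hx : 0 < x) (hy : 0 < y) :
    a * Real.log x + (1 - a) * Real.log y ≤ Real.log (a * x + (1 - a) * y) := by
  have ha1' : (0:ℝ) ≤ 1 - a := by linarith
  have hS : 0 < a * x + (1 - a) * y := by
    rcases lt_or_ge a 1 with h | h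
    · nlinarith [mul_nonneg ha0 hx.le, mul_pos (by linarith : (0:ℝ) < 1 - a) hy]
    · have : a = 1 := le_antisymm ha1 h
      rw [this]; nlinarith
  set S := a * x + (1 - a) * y with hS_def
  have h1 : Real.log x - Real.log S ≤ x / S - 1 := by
    have h := Real.log_le_sub_one_of_pos (div_pos hx hS)
    rwa [Real.log_div hx.ne' hS.ne'] at h
  have h2 : Real.log y - Real.log S ≤ y / S - 1 := by
    have h := Real.log_le_sub_one_of_pos (div_pos hy hS)
    rwa [Real.log_div hy.ne' hS.ne'] at h
  have e1 := mul_le_mul_of_nonneg_left h1 ha0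
  have e2 := mul_le_mul_of_nonneg_left h2 ha1'
  have hsum : a * (x / S) + (1 - a) * (y / S) = 1 := by
    field_simp
    exact hS_def.symm
  nlinarith [e1, e2, hsum]


set_option maxHeartbeats 1000000 in
/-- Key entropy inequality for the mixture Maxwellians:
`ν12 n2 H(M12) + ν21 n1 H(M21) ≤ ν12 n2 H(M1) + ν21 n1 H(M2)`. -/
theorem bgk_mixture_maxwellian_entropy_inequality
    (d : ℕ) (hd : 1 ≤ d)
    (m1 m2 : ℝ) (hm1 : 0 < m1) (hm2 : 0 < m2)
    (n1 n2 : ℝ) (hn1 : 0 < n1) (hn2 : 0 < n2)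
    (T1 T2 : ℝ) (hT1 : 0 < T1) (hT2 : 0 < T2)
    (u1 u2 : EuclideanSpace ℝ (Fin d))
    (ε : ℝ) (hε0 : 0 < ε) (hε1 : ε ≤ 1)
    (ν21 : ℝ) (hν21 : 0 < ν21) (ν12 : ℝ) (hν12 : ν12 = ε * ν21)
    (δ α γ : ℝ)
    (hδlow : ((m1 / m2) * ε - 1) / (1 + (m1 / m2) * ε) ≤ δ) (hδhigh : δ ≤ 1)
    (hα0 : 0 ≤ α) (hα1 : α ≤ 1)
    (hγ0 : 0 ≤ γ)
    (hγhigh : γ ≤ (m1 / d) * (1 - δ) * ((1 + (m1 / m2) * ε) * δ + 1 - (m1 / m2) * ε))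
    (u12 : EuclideanSpace ℝ (Fin d)) (hu12 : u12 = δ • u1 + (1 - δ) • u2)
    (u21 : EuclideanSpace ℝ (Fin d))
    (hu21 : u21 = u2 - ((m1 / m2) * ε * (1 - δ)) • (u2 - u1))
    (T12 : ℝ) (hT12 : T12 = α * T1 + (1 - α) * T2 + γ * ‖u1 - u2‖ ^ 2)
    (T21 : ℝ)
    (hT21 : T21 = ((1 / d) * ε * m1 * (1 - δ) * ((m1 / m2) * ε * (δ - 1) + δ + 1) - ε * γ)
        * ‖u1 - u2‖ ^ 2 + ε * (1 - α) * T1 + (1 - ε * (1 - α)) * T2) :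
    ν12 * n2 * entropy d (maxwellian d n1 u12 T12 m1)
        + ν21 * n1 * entropy d (maxwellian d n2 u21 T21 m2)
      ≤ ν12 * n2 * entropy d (maxwellian d n1 u1 T1 m1)
        + ν21 * n1 * entropy d (maxwellian d n2 u2 T2 m2) := by
  have hX : (0:ℝ) ≤ ‖u1 - u2‖ ^ 2 := sq_nonneg _
  generalize hQ : ‖u1 - u2‖ ^ 2 = Q at hT12 hT21 hX
  clear hu12 hu21 hδlow hQ
  -- positivity of convex combinations
  have hconv : ∀ a x y : ℝ, 0 ≤ a → a ≤ 1 → 0 < x → 0 < y → 0 < a * x + (1 - a) * y := by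
    intro a x y ha0 ha1 hx hy
    rcases lt_or_ge a 1 with h | h
    · nlinarith [mul_nonneg ha0 hx.le, mul_pos (by linarith : (0:ℝ) < 1 - a) hy]
    · have : a = 1 := le_antisymm ha1 h
      rw [this]; nlinarith
  have hApos : 0 < α * T1 + (1 - α) * T2 := hconv α T1 T2 hα0 hα1 hT1 hT2
  have hβ0 : 0 ≤ ε * (1 - α) := mul_nonneg hε0.le (by linarith)
  have hβ1 : ε * (1 - α) ≤ 1 := by nlinarith [mul_nonneg hε0.le hα0]
  have hBpos : 0 < ε * (1 - α) * T1 + (1 - ε * (1 - α)) * T2 :=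
    hconv (ε * (1 - α)) T1 T2 hβ0 hβ1 hT1 hT2
  -- nonnegativity of the coefficient in T21
  have hcoef : 0 ≤ (1 / d) * ε * m1 * (1 - δ) * ((m1 / m2) * ε * (δ - 1) + δ + 1) - ε * γ := by
    have h := mul_le_mul_of_nonneg_left hγhigh hε0.le
    have heq : (1 / (d:ℝ)) * ε * m1 * (1 - δ) * ((m1 / m2) * ε * (δ - 1) + δ + 1)
        = ε * ((m1 / d) * (1 - δ) * ((1 + (m1 / m2) * ε) * δ + 1 - (m1 / m2) * ε)) := by
      ring
    linarith [heq ▸ h]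
  have hT12pos : 0 < T12 := by
    rw [hT12]; nlinarith [mul_nonneg hγ0 hX]
  have hcoefX : 0 ≤ ((1 / d) * ε * m1 * (1 - δ) * ((m1 / m2) * ε * (δ - 1) + δ + 1) - ε * γ)
      * Q := mul_nonneg hcoef hX
  have hT21pos : 0 < T21 := by
    rw [hT21]; linarith
  -- key logarithmic inequality
  have hA : α * Real.log T1 + (1 - α) * Real.log T2 ≤ Real.log (α * T1 + (1 - α) * T2) :=
    bgk_log_concave2 hα0 hα1 hT1 hT2
  have hB : ε * (1 - α) * Real.log T1 + (1 - ε * (1 - α)) * Real.log T2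
      ≤ Real.log (ε * (1 - α) * T1 + (1 - ε * (1 - α)) * T2) :=
    bgk_log_concave2 hβ0 hβ1 hT1 hT2
  have h12 : Real.log (α * T1 + (1 - α) * T2) ≤ Real.log T12 := by
    apply Real.log_le_log hApos
    rw [hT12]; nlinarith [mul_nonneg hγ0 hX]
  have h21 : Real.log (ε * (1 - α) * T1 + (1 - ε * (1 - α)) * T2) ≤ Real.log T21 := by
    apply Real.log_le_log hBpos
    rw [hT21]; linarith
  have H1 : ε * (α * Real.log T1 + (1 - α) * Real.log T2) ≤ ε * Real.log T12 :=
    mul_le_mul_of_nonneg_left (hA.trans h12) hε0.le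
  have H2 : ε * (1 - α) * Real.log T1 + (1 - ε * (1 - α)) * Real.log T2 ≤ Real.log T21 :=
    hB.trans h21
  have key : ε * Real.log T1 + Real.log T2 ≤ ε * Real.log T12 + Real.log T21 := by
    nlinarith [H1, H2]
  -- rewrite entropies
  rw [bgk_maxwellian_entropy d n1 T12 m1 hn1 hT12pos hm1 u12,
    bgk_maxwellian_entropy d n2 T21 m2 hn2 hT21pos hm2 u21,
    bgk_maxwellian_entropy d n1 T1 m1 hn1 hT1 hm1 u1,
    bgk_maxwellian_entropy d n2 T2 m2 hn2 hT2 hm2 u2,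
    Real.log_div hT12pos.ne' hm1.ne', Real.log_div hT21pos.ne' hm2.ne',
    Real.log_div hT1.ne' hm1.ne', Real.log_div hT2.ne' hm2.ne', hν12]
  have hcpos : (0:ℝ) ≤ (d : ℝ) / 2 * n1 * n2 * ν21 := by positivity
  have Hc := mul_le_mul_of_nonneg_left key hcpos
  nlinarith [Hc]
end
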